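/- Suppose 𝐋₁,…,𝐋_d are random finite nonempty subsets of {1,…,k}, t ≥ 1 is an integer, and 𝐗 = #{i : |𝐋_i| ≤ t}. Given the lists, choose σ(i) ∈ 𝐋_i uniformly and independently for each i, and set 𝐋 = {1,…,k} \ {σ(i) : i ∈ [d]}. If k₀ := k - E[𝐗] > 0, then E[|𝐋|] ≥ k₀ · exp(-(1+1/t)·d/k₀). -/

import Mathlib

open Finset

-- Weierstrass product inequality
lemma weier {ι : Type*} (s : Finset ι) (x : ι → ℝ) (h0 : ∀ i ∈ s, 0 ≤ x i) (h1 : ∀ i ∈ s, x i ≤ 1) :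
    1 - ∑ i ∈ s, x i ≤ ∏ i ∈ s, (1 - x i) := by
  induction s using Finset.cons_induction with
  | empty => simp
  | cons i s hi ih =>
    rw [prod_cons, sum_cons]
    have hs : 0 ≤ ∑ j ∈ s, x j := sum_nonneg (fun j hj => h0 j (mem_cons_of_mem hj))
    have h2 := ih (fun j hj => h0 j (mem_cons_of_mem hj)) (fun j hj => h1 j (mem_cons_of_mem hj))
    have hxi0 := h0 i (mem_cons_self ..)
    have hxi1 := h1 i (mem_cons_self ..)
    nlinarith [mul_le_mul_of_nonneg_left h2 (by linarith : (0:ℝ) ≤ 1 - x i)]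

-- tangent line inequality for s * exp (-c/s)
lemma tangent (c k₀ s : ℝ) (hc : 0 ≤ c) (hk : 0 < k₀) (hs : 0 < s) :
    k₀ * Real.exp (-c/k₀) + Real.exp (-c/k₀) * (1 + c/k₀) * (s - k₀) ≤ s * Real.exp (-c/s) := by
  have h1 : Real.exp (-c/s) = Real.exp (-c/k₀) * Real.exp (c/k₀ - c/s) := by
    rw [← Real.exp_add]; ring_nf
  have h2 : 1 + (c/k₀ - c/s) ≤ Real.exp (c/k₀ - c/s) := by
    linarith [Real.add_one_le_exp (c/k₀ - c/s)]
  have h3 : s * (c/s) = c := by field_simp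
  have h4 : k₀ * (c/k₀) = c := by field_simp
  have h5 : (0:ℝ) < Real.exp (-c/k₀) := Real.exp_pos _
  rw [h1]
  nlinarith [mul_le_mul_of_nonneg_left h2 hs.le]

lemma count_id (d k : ℕ) (L : Fin d → Finset ℕ) :
    (∑ σ : ∀ i, {n // n ∈ L i},
        (((Finset.Icc 1 k).filter (fun c => ∀ i, (σ i : ℕ) ≠ c)).card : ℝ))
    = ∑ c ∈ Finset.Icc 1 k, ∏ i, (((L i).erase c).card : ℝ) := by
  have h1 : ∀ σ : (∀ i, {n // n ∈ L i}),
      (((Finset.Icc 1 k).filter (fun c => ∀ i, (σ i : ℕ) ≠ c)).card : ℝ)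
      = ∑ c ∈ Finset.Icc 1 k, ∏ i, (if (σ i : ℕ) ≠ c then (1:ℝ) else 0) := by
    intro σ
    rw [card_filter]
    push_cast
    refine Finset.sum_congr rfl (fun c _ => ?_)
    rw [Fintype.prod_boole]
    simp
  rw [Finset.sum_congr rfl (fun σ _ => h1 σ), Finset.sum_comm]
  refine Finset.sum_congr rfl (fun c _ => ?_)
  rw [← Fintype.prod_sum (fun i (x : {n // n ∈ L i}) => if (x : ℕ) ≠ c then (1:ℝ) else 0)]
  refine Finset.prod_congr rfl (fun i _ => ?_)
  rw [Finset.sum_coe_sort (L i) (fun n => if n ≠ c then (1:ℝ) else 0),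
    ← Finset.filter_ne' (L i) c, card_filter]
  push_cast
  rfl

lemma factor_bound (t m : ℕ) (ht : 1 ≤ t) (hm : t < m) (lam : ℝ) (hlam : lam = 1 + 1/(t:ℝ)) :
    Real.exp (-(lam * ((m:ℝ))⁻¹)) ≤ 1 - ((m:ℝ))⁻¹ := by
  have htR : (1:ℝ) ≤ t := by exact_mod_cast ht
  have hmR : (t:ℝ) + 1 ≤ m := by exact_mod_cast hm
  have hm0 : (0:ℝ) < m := by linarith
  have hu0 : (0:ℝ) < (m:ℝ)⁻¹ := inv_pos.mpr hm0
  have hmi : (m:ℝ) * (m:ℝ)⁻¹ = 1 := mul_inv_cancel₀ hm0.ne'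
  have hti : (t:ℝ) * ((t:ℝ))⁻¹ = 1 := mul_inv_cancel₀ (by linarith)
  have h4 : ((t:ℝ)+1) * (m:ℝ)⁻¹ ≤ 1 := by
    calc ((t:ℝ)+1) * (m:ℝ)⁻¹ ≤ (m:ℝ) * (m:ℝ)⁻¹ := by
          exact mul_le_mul_of_nonneg_right hmR hu0.le
      _ = 1 := hmi
  have ht0 : (0:ℝ) < ((t:ℝ))⁻¹ := inv_pos.mpr (by linarith)
  have key : (0:ℝ) ≤ ((m:ℝ)⁻¹ * (t:ℝ)⁻¹) * (1 - ((t:ℝ)+1)*(m:ℝ)⁻¹) :=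
    mul_nonneg (mul_nonneg hu0.le ht0.le) (by linarith)
  have h3 : 1 ≤ (1 - (m:ℝ)⁻¹) * (1 + lam * (m:ℝ)⁻¹) := by
    rw [hlam, one_div]
    nlinarith [key, hti, hmi, mul_pos hu0 hu0, mul_pos hu0 ht0]
  have h1 : 1 + lam * (m:ℝ)⁻¹ ≤ Real.exp (lam * (m:ℝ)⁻¹) :=
    by linarith [Real.add_one_le_exp (lam * (m:ℝ)⁻¹)]
  have h2 : Real.exp (-(lam * (m:ℝ)⁻¹)) * Real.exp (lam * (m:ℝ)⁻¹) = 1 := by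
    rw [← Real.exp_add]; simp
  have he : (0:ℝ) < Real.exp (-(lam * (m:ℝ)⁻¹)) := Real.exp_pos _
  have hlam0 : 0 ≤ lam := by rw [hlam]; positivity
  have hB : (0:ℝ) < 1 + lam * (m:ℝ)⁻¹ := by positivity
  have hstep : Real.exp (-(lam * (m:ℝ)⁻¹)) * (1 + lam * (m:ℝ)⁻¹)
      ≤ (1 - (m:ℝ)⁻¹) * (1 + lam * (m:ℝ)⁻¹) := by
    nlinarith [mul_le_mul_of_nonneg_left h1 he.le]
  exact le_of_mul_le_mul_right hstep hB

set_option maxHeartbeats 1000000 in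
lemma perOmega (d k t : ℕ) (ht : 1 ≤ t) (L : Fin d → Finset ℕ)
    (hne : ∀ i, (L i).Nonempty) (hsub : ∀ i, L i ⊆ Finset.Icc 1 k)
    (c k₀ : ℝ) (hc : c = (1 + 1/(t:ℝ)) * d) (hk : 0 < k₀) :
    k₀ * Real.exp (-c/k₀)
      + Real.exp (-c/k₀) * (1 + c/k₀) *
        (((k:ℝ) - ((univ.filter (fun i : Fin d => (L i).card ≤ t)).card : ℝ)) - k₀)
    ≤ (∑ σ : ∀ i, {n // n ∈ L i},
        (((Finset.Icc 1 k).filter (fun cc => ∀ i, (σ i : ℕ) ≠ cc)).card : ℝ))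
      / (Fintype.card (∀ i, {n // n ∈ L i}) : ℝ) := by
  classical
  have hm : ∀ i, (0:ℝ) < ((L i).card : ℝ) := fun i => by
    exact_mod_cast (hne i).card_pos
  set x : Fin d → ℕ → ℝ := fun i cc => if cc ∈ L i then (((L i).card : ℝ))⁻¹ else 0 with hxdef
  have hx0 : ∀ i cc, 0 ≤ x i cc := by
    intro i cc; simp only [hxdef]; split
    · exact (inv_pos.mpr (hm i)).le
    · exact le_refl 0
  have hx1 : ∀ i cc, x i cc ≤ 1 := by
    intro i cc; simp only [hxdef]; split
    · exact inv_le_one_of_one_le₀ (by exact_mod_cast (hne i).card_pos)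
    · norm_num
  have hratio : ∀ i cc, (((L i).erase cc).card : ℝ) / ((L i).card : ℝ) = 1 - x i cc := by
    intro i cc
    by_cases h : cc ∈ L i
    · rw [Finset.card_erase_of_mem h]
      have h1 : 1 ≤ (L i).card := (hne i).card_pos
      rw [Nat.cast_sub h1, Nat.cast_one]
      simp only [hxdef, if_pos h]
      field_simp
    · rw [Finset.erase_eq_of_notMem h]
      simp only [hxdef, if_neg h]
      field_simp [(hm i).ne']
      norm_num
  have hN : ((Fintype.card (∀ i, {n // n ∈ L i}) : ℝ)) = ∏ i, ((L i).card : ℝ) := by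
    rw [Fintype.card_pi]
    push_cast
    exact Finset.prod_congr rfl (fun i _ => by rw [Fintype.card_coe])
  have hNpos : (0:ℝ) < ∏ i, ((L i).card : ℝ) := Finset.prod_pos (fun i _ => hm i)
  rw [count_id, hN, Finset.sum_div]
  have hterm : ∀ cc, (∏ i, (((L i).erase cc).card : ℝ)) / (∏ i, ((L i).card : ℝ))
      = ∏ i, (1 - x i cc) := by
    intro cc
    rw [← Finset.prod_div_distrib]
    exact Finset.prod_congr rfl (fun i _ => hratio i cc)
  rw [Finset.sum_congr rfl (fun cc _ => hterm cc)]
  set S : Finset (Fin d) := univ.filter (fun i : Fin d => (L i).card ≤ t) with hS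
  set T : Finset (Fin d) := univ.filter (fun i : Fin d => ¬ (L i).card ≤ t) with hT
  set Q : ℕ → ℝ := fun cc => ∏ i ∈ S, (1 - x i cc) with hQdef
  set a : ℕ → ℝ := fun cc => ∑ i ∈ T, x i cc with hadef
  set lam : ℝ := 1 + 1/(t:ℝ) with hlamdef
  have hlam0 : 0 ≤ lam := by rw [hlamdef]; positivity
  have hc0 : 0 ≤ c := by rw [hc]; positivity
  have hcd : c = lam * d := by rw [hc, hlamdef]
  have hQ0 : ∀ cc, 0 ≤ Q cc := fun cc =>
    Finset.prod_nonneg (fun i _ => by linarith [hx1 i cc])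
  have hQ1 : ∀ cc, Q cc ≤ 1 := fun cc =>
    Finset.prod_le_one (fun i _ => by linarith [hx1 i cc]) (fun i _ => by linarith [hx0 i cc])
  have ha0 : ∀ cc, 0 ≤ a cc := fun cc => Finset.sum_nonneg (fun i _ => hx0 i cc)
  have hsplit : ∀ cc : ℕ, ∏ i, (1 - x i cc) = Q cc * ∏ i ∈ T, (1 - x i cc) := fun cc =>
    (Finset.prod_filter_mul_prod_filter_not univ _ _).symm
  have hP0 : ∀ cc : ℕ, (0:ℝ) ≤ ∏ i, (1 - x i cc) := fun cc =>
    Finset.prod_nonneg (fun i _ => by linarith [hx1 i cc])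
  have hR : ∀ cc, Real.exp (-(lam * a cc)) ≤ ∏ i ∈ T, (1 - x i cc) := by
    intro cc
    have he : Real.exp (-(lam * a cc)) = ∏ i ∈ T, Real.exp (-(lam * x i cc)) := by
      rw [← Real.exp_sum]
      congr 1
      rw [hadef, Finset.mul_sum, ← Finset.sum_neg_distrib]
    rw [he]
    refine Finset.prod_le_prod (fun i _ => (Real.exp_pos _).le) (fun i hi => ?_)
    rw [hT, Finset.mem_filter] at hi
    by_cases h : cc ∈ L i
    · have hb := factor_bound t (L i).card ht (lt_of_not_ge hi.2) lam hlamdef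
      simp only [hxdef, if_pos h]
      exact hb
    · simp only [hxdef, if_neg h]
      simp
  have hxsum : ∀ i : Fin d, ∑ cc ∈ Finset.Icc 1 k, x i cc = 1 := by
    intro i
    simp only [hxdef]
    rw [Finset.sum_ite_mem, Finset.inter_eq_right.mpr (hsub i), Finset.sum_const,
      nsmul_eq_mul]
    exact mul_inv_cancel₀ (hm i).ne'
  have hkIcc : (((Finset.Icc 1 k).card : ℕ) : ℝ) = k := by rw [Nat.card_Icc]; simp
  have hsge : (k:ℝ) - (S.card : ℝ) ≤ ∑ cc ∈ Finset.Icc 1 k, Q cc := by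
    have heq : ∑ cc ∈ Finset.Icc 1 k, (1 - ∑ i ∈ S, x i cc) = (k:ℝ) - (S.card : ℝ) := by
      rw [Finset.sum_sub_distrib, Finset.sum_const, Finset.sum_comm,
        Finset.sum_congr rfl (fun i (_ : i ∈ S) => hxsum i), Finset.sum_const,
        nsmul_eq_mul, mul_one, nsmul_eq_mul, mul_one, hkIcc]
    rw [← heq]
    exact Finset.sum_le_sum (fun cc _ =>
      weier S (fun i => x i cc) (fun i _ => hx0 i cc) (fun i _ => hx1 i cc))
  have hasum : ∑ cc ∈ Finset.Icc 1 k, a cc = (T.card : ℝ) := by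
    simp only [hadef]
    rw [Finset.sum_comm, Finset.sum_congr rfl (fun i (_ : i ∈ T) => hxsum i),
      Finset.sum_const, nsmul_eq_mul, mul_one]
  have hTd : (T.card : ℝ) ≤ d := by
    have h1 := Finset.card_filter_le univ (fun i : Fin d => ¬ (L i).card ≤ t)
    rw [Finset.card_univ, Fintype.card_fin] at h1
    exact_mod_cast h1
  set s := ∑ cc ∈ Finset.Icc 1 k, Q cc with hsdef
  have hs0 : 0 ≤ s := Finset.sum_nonneg fun cc _ => hQ0 cc
  have hQR : ∀ cc ∈ Finset.Icc 1 k, Q cc * Real.exp (-(lam * a cc)) ≤ ∏ i, (1 - x i cc) := by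
    intro cc _
    rw [hsplit cc]
    exact mul_le_mul_of_nonneg_left (hR cc) (hQ0 cc)
  have hep : ∀ y : ℝ, (0:ℝ) < Real.exp y := fun y => Real.exp_pos y
  have hDk : k₀ * (c/k₀) = c := by field_simp
  rcases lt_or_ge 0 s with hspos | hsneg
  · -- main case
    have hcs : s * (c/s) = c := by field_simp
    have hper : ∀ cc ∈ Finset.Icc 1 k,
        Real.exp (-c/s) * (Q cc + (c/s) * Q cc - lam * a cc)
          ≤ Q cc * Real.exp (-(lam * a cc)) := by
      intro cc _
      have he1 : Real.exp (-(lam * a cc)) = Real.exp (-c/s) * Real.exp (c/s - lam * a cc) := by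
        rw [← Real.exp_add]; ring_nf
      have he2 : 1 + (c/s - lam * a cc) ≤ Real.exp (c/s - lam * a cc) := by
        linarith [Real.add_one_le_exp (c/s - lam * a cc)]
      have hcsn : 0 ≤ c/s := div_nonneg hc0 hspos.le
      have hla : 0 ≤ lam * a cc := mul_nonneg hlam0 (ha0 cc)
      have hQc := hQ0 cc
      have hQ1c := hQ1 cc
      rw [he1]
      have hq : Q cc * (lam * a cc) ≤ lam * a cc := mul_le_of_le_one_left hla hQ1c
      nlinarith [mul_le_mul_of_nonneg_left he2 (mul_nonneg (hep (-c/s)).le hQc),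
        mul_le_mul_of_nonneg_left hq (hep (-c/s)).le]
    have hsum2 : ∑ cc ∈ Finset.Icc 1 k, (Q cc + (c/s) * Q cc - lam * a cc)
        = s + (c/s) * s - lam * (T.card : ℝ) := by
      rw [Finset.sum_sub_distrib, Finset.sum_add_distrib, ← Finset.mul_sum, ← Finset.mul_sum,
        hasum, ← hsdef]
    have hkey : s * Real.exp (-c/s) ≤ ∑ cc ∈ Finset.Icc 1 k, Q cc * Real.exp (-(lam * a cc)) := by
      calc s * Real.exp (-c/s)
          ≤ Real.exp (-c/s) * (s + (c/s) * s - lam * (T.card : ℝ)) := by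
            have hlT : lam * (T.card : ℝ) ≤ c := by
              rw [hcd]; exact mul_le_mul_of_nonneg_left hTd hlam0
            nlinarith [hep (-c/s), hcs, mul_nonneg (hep (-c/s)).le
              (by linarith : (0:ℝ) ≤ c - lam * (T.card : ℝ))]
        _ = ∑ cc ∈ Finset.Icc 1 k, Real.exp (-c/s) * (Q cc + (c/s) * Q cc - lam * a cc) := by
            rw [← Finset.mul_sum, hsum2]
        _ ≤ _ := Finset.sum_le_sum hper
    have htan := tangent c k₀ s hc0 hk hspos
    have hD : 0 ≤ Real.exp (-c/k₀) * (1 + c/k₀) := by positivity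
    have hfinal : ∑ cc ∈ Finset.Icc 1 k, Q cc * Real.exp (-(lam * a cc))
        ≤ ∑ cc ∈ Finset.Icc 1 k, ∏ i, (1 - x i cc) := Finset.sum_le_sum hQR
    nlinarith [mul_le_mul_of_nonneg_left (sub_le_sub_right hsge k₀) hD]
  · -- degenerate case : s ≤ 0, hence k - X ≤ 0
    have hkX : (k:ℝ) - (S.card : ℝ) ≤ 0 := le_trans hsge hsneg
    have hRHS : (0:ℝ) ≤ ∑ cc ∈ Finset.Icc 1 k, ∏ i, (1 - x i cc) :=
      Finset.sum_nonneg (fun cc _ => hP0 cc)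
    nlinarith [hep (-c/k₀), hDk, mul_le_mul_of_nonneg_left hkX
      (mul_nonneg (hep (-c/k₀)).le (by positivity : (0:ℝ) ≤ 1 + c/k₀))]

theorem stmt_4 (d k t : ℕ) (ht : 1 ≤ t)
    (Ω : Type) [Fintype Ω] (w : Ω → ℝ) (hw0 : ∀ ω, 0 ≤ w ω) (hw1 : ∑ ω, w ω = 1)
    (L : Ω → Fin d → Finset ℕ)
    (hne : ∀ ω i, (L ω i).Nonempty) (hsub : ∀ ω i, L ω i ⊆ Finset.Icc 1 k)
    (k₀ : ℝ)
    (hk₀ : k₀ = (k : ℝ) -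
      ∑ ω, w ω * ((Finset.univ.filter (fun i : Fin d => (L ω i).card ≤ t)).card : ℝ))
    (hk₀pos : 0 < k₀) :
    k₀ * Real.exp (-(1 + 1 / (t : ℝ)) * d / k₀) ≤
      ∑ ω, w ω *
        ((∑ σ : ∀ i : Fin d, {n // n ∈ L ω i},
            (((Finset.Icc 1 k).filter (fun c => ∀ i, (σ i : ℕ) ≠ c)).card : ℝ))
          / (Fintype.card (∀ i : Fin d, {n // n ∈ L ω i}) : ℝ)) := by
  classical
  set c : ℝ := (1 + 1/(t:ℝ)) * d with hcdef
  set A : ℝ := k₀ * Real.exp (-c/k₀) with hA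
  set D : ℝ := Real.exp (-c/k₀) * (1 + c/k₀) with hD
  set X : Ω → ℝ := fun ω =>
    ((Finset.univ.filter (fun i : Fin d => (L ω i).card ≤ t)).card : ℝ) with hXdef
  have key : ∀ ω, A + D * (((k:ℝ) - X ω) - k₀) ≤
      (∑ σ : ∀ i : Fin d, {n // n ∈ L ω i},
          (((Finset.Icc 1 k).filter (fun cc => ∀ i, (σ i : ℕ) ≠ cc)).card : ℝ))
        / (Fintype.card (∀ i : Fin d, {n // n ∈ L ω i}) : ℝ) := fun ω =>
    perOmega d k t ht (L ω) (hne ω) (hsub ω) c k₀ hcdef hk₀pos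
  have hX : ∑ ω, w ω * X ω = (k:ℝ) - k₀ := by
    simp only [hXdef]
    linarith [hk₀]
  have hterm : ∀ ω : Ω, w ω * (A + D * (((k:ℝ) - X ω) - k₀))
      = (A + D * ((k:ℝ) - k₀)) * w ω - D * (w ω * X ω) := fun ω => by ring
  have hsum : ∑ ω, w ω * (A + D * (((k:ℝ) - X ω) - k₀)) = A := by
    rw [Finset.sum_congr rfl (fun ω _ => hterm ω), Finset.sum_sub_distrib,
      ← Finset.mul_sum, ← Finset.mul_sum, hw1, hX]
    ring
  have hmain : A ≤ ∑ ω, w ω *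
      ((∑ σ : ∀ i : Fin d, {n // n ∈ L ω i},
          (((Finset.Icc 1 k).filter (fun cc => ∀ i, (σ i : ℕ) ≠ cc)).card : ℝ))
        / (Fintype.card (∀ i : Fin d, {n // n ∈ L ω i}) : ℝ)) := by
    rw [← hsum]
    exact Finset.sum_le_sum (fun ω _ => mul_le_mul_of_nonneg_left (key ω) (hw0 ω))
  have hrw : -(1 + 1/(t:ℝ)) * d / k₀ = -c/k₀ := by rw [hcdef]; ring
  rw [hrw]
  exact hmain
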